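/- (Gradient recursion, Lemma 5 of the paper) Fix n ≥ 2, c ∈ (0,1), α > 0, y ≥ 0, z ∈ ℝ, and let f̃ⁿ(x) = Σ_{k=0}^{n-1} exp(c^k z - c^{2k} y - α Σ_{l=0}^{k-1} c^{k-l}x_l)(1 - e^{-αx_k}). Then for each k = 0,…,n-2, ∂f̃ⁿ/∂x_k (x) = c·∂f̃ⁿ/∂x_{k+1}(x) + α(1-c)·exp(-c^{2k}y)·F_k(Σ_{l=0}^{k} c^{k-l}x_l - c^k z/α), where F_k(u) = (exp(-αu) - c·exp(-αcu - c^{2k}(c²-1)y))/(1-c). -/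

import Mathlib

open Finset Real

lemma aux_deriv (n : ℕ) (c α y z : ℝ) (x : ℕ → ℝ) (k : ℕ) (hk : k < n) :
    HasDerivAt (fun s => ∑ j ∈ Finset.range n,
        Real.exp (c ^ j * z - c ^ (2 * j) * y
          - α * ∑ l ∈ Finset.range j, c ^ (j - l) * Function.update x k s l)
        * (1 - Real.exp (-α * Function.update x k s j)))
      (α * Real.exp (-α * x k)
          * Real.exp (c ^ k * z - c ^ (2 * k) * y
              - α * ∑ l ∈ Finset.range k, c ^ (k - l) * x l)
        - ∑ j ∈ Finset.range n, (if k < j then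
            α * c ^ (j - k) * Real.exp (c ^ j * z - c ^ (2 * j) * y
              - α * ∑ l ∈ Finset.range j, c ^ (j - l) * x l)
              * (1 - Real.exp (-α * x j)) else 0))
      (x k) := by
  set A : ℕ → ℝ := fun j => c ^ j * z - c ^ (2 * j) * y
      - α * ∑ l ∈ Finset.range j, c ^ (j - l) * x l with hA
  -- derivative of inner sums
  have hS : ∀ j : ℕ, HasDerivAt (fun s => ∑ l ∈ Finset.range j, c ^ (j - l) * Function.update x k s l)
      (if k < j then c ^ (j - k) else 0) (x k) := by
    intro j
    have h1 : (if k < j then c ^ (j - k) else 0)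
        = ∑ l ∈ Finset.range j, (if l = k then c ^ (j - l) else 0) := by
      rw [Finset.sum_ite_eq' (Finset.range j) k (fun l => c ^ (j - l))]
      simp [Finset.mem_range]
    rw [h1]
    apply HasDerivAt.fun_sum
    intro l _
    rcases eq_or_ne l k with rfl | hlk
    · simp only [if_pos rfl]
      have : (fun s => c ^ (j - l) * Function.update x l s l) = fun s => c ^ (j - l) * s := by
        funext s; simp
      rw [this]
      simpa using (hasDerivAt_id (x l)).const_mul (c ^ (j - l))
    · simp only [if_neg hlk]
      have : (fun s => c ^ (j - l) * Function.update x k s l) = fun _ => c ^ (j - l) * x l := by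
        funext s; simp [Function.update_of_ne hlk]
      rw [this]
      exact hasDerivAt_const _ _
  have hsum : HasDerivAt (fun s => ∑ j ∈ Finset.range n,
        Real.exp (c ^ j * z - c ^ (2 * j) * y
          - α * ∑ l ∈ Finset.range j, c ^ (j - l) * Function.update x k s l)
        * (1 - Real.exp (-α * Function.update x k s j)))
      (∑ j ∈ Finset.range n,
        (Real.exp (A j) * (-(α * (if k < j then c ^ (j - k) else 0))) * (1 - Real.exp (-α * x j))
          + Real.exp (A j) * (if j = k then α * Real.exp (-α * x k) else 0)))
      (x k) := by
    apply HasDerivAt.fun_sum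
    intro j _
    have h1 : HasDerivAt (fun s => Real.exp (c ^ j * z - c ^ (2 * j) * y
          - α * ∑ l ∈ Finset.range j, c ^ (j - l) * Function.update x k s l))
        (Real.exp (A j) * (-(α * (if k < j then c ^ (j - k) else 0)))) (x k) := by
      have := (((hS j).const_mul α).const_sub (c ^ j * z - c ^ (2 * j) * y)).exp
      simpa [hA] using this
    have h2 : HasDerivAt (fun s => 1 - Real.exp (-α * Function.update x k s j))
        (if j = k then α * Real.exp (-α * x k) else 0) (x k) := by
      rcases eq_or_ne j k with rfl | hjk
      · simp only [if_pos rfl]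
        have he : (fun s => 1 - Real.exp (-α * Function.update x j s j))
            = fun s => 1 - Real.exp (-α * s) := by
          funext s; simp
        rw [he]
        have h0 := (((hasDerivAt_id (x j)).const_mul (-α)).exp).const_sub 1
        simp only [id_eq] at h0
        refine h0.congr_deriv ?_
        simp only [if_pos trivial]
        ring
      · simp only [if_neg hjk]
        have he : (fun s => 1 - Real.exp (-α * Function.update x k s j))
            = fun _ => 1 - Real.exp (-α * x j) := by
          funext s; simp [Function.update_of_ne hjk]
        rw [he]
        exact hasDerivAt_const _ _
    have := h1.fun_mul h2
    simpa [hA] using this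
  convert hsum using 1
  rw [Finset.sum_add_distrib]
  have e1 : ∑ j ∈ Finset.range n, Real.exp (A j) * (if j = k then α * Real.exp (-α * x k) else 0)
      = α * Real.exp (-α * x k) * Real.exp (A k) := by
    have : ∀ j, Real.exp (A j) * (if j = k then α * Real.exp (-α * x k) else 0)
        = (if j = k then Real.exp (A j) * (α * Real.exp (-α * x k)) else 0) := by
      intro j; split_ifs <;> ring
    simp_rw [this]
    rw [Finset.sum_ite_eq' (Finset.range n) k]
    simp [Finset.mem_range.mpr hk]
    ring
  have e2 : ∑ j ∈ Finset.range n,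
      Real.exp (A j) * (-(α * (if k < j then c ^ (j - k) else 0))) * (1 - Real.exp (-α * x j))
      = -∑ j ∈ Finset.range n, (if k < j then
          α * c ^ (j - k) * Real.exp (A j) * (1 - Real.exp (-α * x j)) else 0) := by
    rw [← Finset.sum_neg_distrib]
    apply Finset.sum_congr rfl
    intro j _
    split_ifs <;> ring
  rw [e1, e2]
  ring

theorem gradient_recursion (n : ℕ) (hn : 2 ≤ n) (c : ℝ) (hc : c ∈ Set.Ioo (0 : ℝ) 1)
    (α y z : ℝ) (hα : 0 < α) (hy : 0 ≤ y)
    (f : (ℕ → ℝ) → ℝ)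
    (hf : ∀ x, f x = ∑ k ∈ Finset.range n,
        Real.exp (c ^ k * z - c ^ (2 * k) * y
          - α * ∑ l ∈ Finset.range k, c ^ (k - l) * x l)
        * (1 - Real.exp (-α * x k)))
    (F : ℕ → ℝ → ℝ)
    (hF : ∀ k u, F k u =
      (Real.exp (-α * u) - c * Real.exp (-α * c * u - c ^ (2 * k) * (c ^ 2 - 1) * y))
        / (1 - c))
    (x : ℕ → ℝ) (k : ℕ) (hk : k + 1 < n) :
    deriv (fun s => f (Function.update x k s)) (x k)
      = c * deriv (fun s => f (Function.update x (k + 1) s)) (x (k + 1))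
        + α * (1 - c) * Real.exp (-c ^ (2 * k) * y)
          * F k ((∑ l ∈ Finset.range (k + 1), c ^ (k - l) * x l) - c ^ k * z / α) := by
  obtain ⟨hc0, hc1⟩ := hc
  have h1c : (1 : ℝ) - c ≠ 0 := by linarith
  have h1 : (fun s => f (Function.update x k s)) = fun s => ∑ j ∈ Finset.range n,
      Real.exp (c ^ j * z - c ^ (2 * j) * y
        - α * ∑ l ∈ Finset.range j, c ^ (j - l) * Function.update x k s l)
      * (1 - Real.exp (-α * Function.update x k s j)) := by
    funext s; rw [hf]
  have h2 : (fun s => f (Function.update x (k + 1) s)) = fun s => ∑ j ∈ Finset.range n,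
      Real.exp (c ^ j * z - c ^ (2 * j) * y
        - α * ∑ l ∈ Finset.range j, c ^ (j - l) * Function.update x (k + 1) s l)
      * (1 - Real.exp (-α * Function.update x (k + 1) s j)) := by
    funext s; rw [hf]
  rw [h1, h2, (aux_deriv n c α y z x k (by omega)).deriv, (aux_deriv n c α y z x (k + 1) hk).deriv,
    hF]
  -- split the first sum
  have hsplit : (∑ j ∈ Finset.range n, (if k < j then
        α * c ^ (j - k) * Real.exp (c ^ j * z - c ^ (2 * j) * y
          - α * ∑ l ∈ Finset.range j, c ^ (j - l) * x l) * (1 - Real.exp (-α * x j)) else 0))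
      = α * c * Real.exp (c ^ (k + 1) * z - c ^ (2 * (k + 1)) * y
          - α * ∑ l ∈ Finset.range (k + 1), c ^ (k + 1 - l) * x l)
          * (1 - Real.exp (-α * x (k + 1)))
        + c * ∑ j ∈ Finset.range n, (if k + 1 < j then
            α * c ^ (j - (k + 1)) * Real.exp (c ^ j * z - c ^ (2 * j) * y
              - α * ∑ l ∈ Finset.range j, c ^ (j - l) * x l)
              * (1 - Real.exp (-α * x j)) else 0) := by
    have step : ∀ j ∈ Finset.range n, (if k < j then
          α * c ^ (j - k) * Real.exp (c ^ j * z - c ^ (2 * j) * y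
            - α * ∑ l ∈ Finset.range j, c ^ (j - l) * x l) * (1 - Real.exp (-α * x j)) else 0)
        = (if j = k + 1 then α * c * Real.exp (c ^ j * z - c ^ (2 * j) * y
            - α * ∑ l ∈ Finset.range j, c ^ (j - l) * x l) * (1 - Real.exp (-α * x j)) else 0)
          + c * (if k + 1 < j then α * c ^ (j - (k + 1)) * Real.exp (c ^ j * z - c ^ (2 * j) * y
              - α * ∑ l ∈ Finset.range j, c ^ (j - l) * x l)
              * (1 - Real.exp (-α * x j)) else 0) := by
      intro j _
      rcases lt_trichotomy j (k + 1) with h | h | h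
      · rw [if_neg (by omega), if_neg (by omega), if_neg (by omega)]; ring
      · subst h
        rw [if_pos (by omega), if_pos rfl, if_neg (by omega)]
        norm_num
      · rw [if_pos (by omega), if_neg (by omega), if_pos h]
        have hjk : j - k = (j - (k + 1)) + 1 := by omega
        rw [hjk, pow_succ]
        ring
    rw [Finset.sum_congr rfl step, Finset.sum_add_distrib, ← Finset.mul_sum,
      Finset.sum_ite_eq' (Finset.range n) (k + 1), if_pos (Finset.mem_range.mpr hk)]
  rw [hsplit]
  -- now pure algebra with exponentials
  have hu : (∑ l ∈ Finset.range (k + 1), c ^ (k - l) * x l)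
      = (∑ l ∈ Finset.range k, c ^ (k - l) * x l) + x k := by
    rw [Finset.sum_range_succ]; simp
  have key1 : Real.exp (-c ^ (2 * k) * y)
      * Real.exp (-α * ((∑ l ∈ Finset.range (k + 1), c ^ (k - l) * x l) - c ^ k * z / α))
      = Real.exp (-α * x k) * Real.exp (c ^ k * z - c ^ (2 * k) * y
          - α * ∑ l ∈ Finset.range k, c ^ (k - l) * x l) := by
    rw [← Real.exp_add, ← Real.exp_add]
    congr 1
    rw [hu]
    field_simp
    ring
  have key2 : Real.exp (-c ^ (2 * k) * y)
      * Real.exp (-α * c * ((∑ l ∈ Finset.range (k + 1), c ^ (k - l) * x l) - c ^ k * z / α)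
          - c ^ (2 * k) * (c ^ 2 - 1) * y)
      = Real.exp (c ^ (k + 1) * z - c ^ (2 * (k + 1)) * y
          - α * ∑ l ∈ Finset.range (k + 1), c ^ (k + 1 - l) * x l) := by
    rw [← Real.exp_add]
    congr 1
    have hs : (∑ l ∈ Finset.range (k + 1), c ^ (k + 1 - l) * x l)
        = c * ∑ l ∈ Finset.range (k + 1), c ^ (k - l) * x l := by
      rw [Finset.mul_sum]
      apply Finset.sum_congr rfl
      intro l hl
      have hlk : k + 1 - l = (k - l) + 1 := by
        have := Finset.mem_range.mp hl; omega
      rw [hlk, pow_succ]; ring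
    rw [hs]
    have hp1 : c ^ (2 * (k + 1)) = c ^ (2 * k) * c ^ 2 := by
      rw [← pow_add]; ring_nf
    have hp2 : c ^ (k + 1) = c ^ k * c := by rw [pow_succ]
    rw [hp1, hp2]
    field_simp
    ring
  have hgen : ∀ P X Y : ℝ, α * (1 - c) * P * ((X - c * Y) / (1 - c))
      = α * (P * X) - α * c * (P * Y) := by
    intro P X Y
    field_simp
  rw [hgen, key1, key2]
  ring
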